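/- For positive definite matrices A, B and arbitrary matrix C, the map L(A,B,C) = C* G(A,B)⁻¹ C is jointly convex, where G(A,B) = B^{1/2}(B^{-1/2} A B^{-1/2})^{1/2} B^{1/2} is the geometric mean. -/

import Mathlib

open Matrix
open scoped ComplexOrder Classical

/-- Square root of a positive semidefinite matrix, extended by `0`. -/
noncomputable def msqrt {n : Type*} [Fintype n] [DecidableEq n] (A : Matrix n n ℂ) :
    Matrix n n ℂ :=
  if h : A.PosSemidef then
    (h.1.eigenvectorUnitary : Matrix n n ℂ) * diagonal ((↑) ∘ (√·) ∘ h.1.eigenvalues) *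
      (star h.1.eigenvectorUnitary : Matrix n n ℂ)
  else 0

/-- Real power of a Hermitian matrix via the functional calculus, extended by `0`. -/
noncomputable def mrpow {n : Type*} [Fintype n] [DecidableEq n] (A : Matrix n n ℂ) (α : ℝ) :
    Matrix n n ℂ :=
  if h : A.IsHermitian then h.cfc (fun t => t ^ α) else 0

/-- A completely positive linear map between matrix algebras (Choi–Kraus form). -/
def IsCPMap {n m : Type*} [Fintype n] [Fintype m] (Φ : Matrix n n ℂ → Matrix m m ℂ) : Prop :=
  ∃ (r : ℕ) (C : Fin r → Matrix n m ℂ), ∀ X, Φ X = ∑ i, (C i)ᴴ * X * C i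

/-- The matrix geometric mean `A^{1/2} (A^{-1/2} B A^{-1/2})^{1/2} A^{1/2}`. -/
noncomputable def geomMean {n : Type*} [Fintype n] [DecidableEq n] (A B : Matrix n n ℂ) :
    Matrix n n ℂ :=
  msqrt A * msqrt ((msqrt A)⁻¹ * B * (msqrt A)⁻¹) * msqrt A

/-- The weighted geometric mean `B^{1/2} (B^{-1/2} A B^{-1/2})^α B^{1/2}`. -/
noncomputable def wgeomMean {n : Type*} [Fintype n] [DecidableEq n] (α : ℝ)
    (A B : Matrix n n ℂ) : Matrix n n ℂ :=
  msqrt B * mrpow ((msqrt B)⁻¹ * A * (msqrt B)⁻¹) α * msqrt B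

/-- The harmonic mean `2 (A⁻¹ + B⁻¹)⁻¹`. -/
noncomputable def harmMean {n : Type*} [Fintype n] [DecidableEq n] (A B : Matrix n n ℂ) :
    Matrix n n ℂ :=
  (2 : ℂ) • (A⁻¹ + B⁻¹)⁻¹

namespace Matrix.PosSemidef

variable {n : Type*} [Fintype n] [DecidableEq n]

/-- The square root of a positive semidefinite matrix (as in the older Mathlib). -/
noncomputable abbrev sqrt {A : Matrix n n ℂ} (h : A.PosSemidef) : Matrix n n ℂ :=
  (h.1.eigenvectorUnitary : Matrix n n ℂ) * diagonal ((↑) ∘ (√·) ∘ h.1.eigenvalues) *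
    (star h.1.eigenvectorUnitary : Matrix n n ℂ)

lemma posSemidef_sqrt {A : Matrix n n ℂ} (h : A.PosSemidef) : h.sqrt.PosSemidef := by
  have hd : (diagonal (((↑) : ℝ → ℂ) ∘ (√·) ∘ h.1.eigenvalues)).PosSemidef :=
    posSemidef_diagonal_iff.2 fun i => by
      simp only [Function.comp_apply]
      exact Complex.zero_le_real.2 (Real.sqrt_nonneg _)
  have := hd.mul_mul_conjTranspose_same (h.1.eigenvectorUnitary : Matrix n n ℂ)
  rw [sqrt, star_eq_conjTranspose]
  exact this

lemma sqrt_mul_self {A : Matrix n n ℂ} (h : A.PosSemidef) : h.sqrt * h.sqrt = A := by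
  set U : Matrix n n ℂ := (h.1.eigenvectorUnitary : Matrix n n ℂ) with hUdef
  set D := diagonal (((↑) : ℝ → ℂ) ∘ (√·) ∘ h.1.eigenvalues) with hDdef
  have hU : (star h.1.eigenvectorUnitary : Matrix n n ℂ) * U = 1 := Unitary.coe_star_mul_self _
  have hD : D * D = diagonal (((↑) : ℝ → ℂ) ∘ h.1.eigenvalues) := by
    rw [hDdef, diagonal_mul_diagonal]
    congr 1
    funext i
    simp only [Function.comp_apply, ← Complex.ofReal_mul, Real.mul_self_sqrt (h.eigenvalues_nonneg i)]
  calc h.sqrt * h.sqrt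
      = U * (D * ((star h.1.eigenvectorUnitary : Matrix n n ℂ) * U) * D) *
          (star h.1.eigenvectorUnitary : Matrix n n ℂ) := by simp only [sqrt, Matrix.mul_assoc]; rfl
    _ = U * (D * D) * (star h.1.eigenvectorUnitary : Matrix n n ℂ) := by rw [hU, Matrix.mul_one]
    _ = A := by
      rw [hD]
      conv_rhs => rw [h.1.spectral_theorem, Unitary.conjStarAlgAut_apply]
      rfl

end Matrix.PosSemidef

section Auxiliary

set_option linter.unusedSectionVars false

variable {n : Type*} [Fintype n] [DecidableEq n]

lemma geomMean_def' (A B : Matrix n n ℂ) : geomMean A B =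
    msqrt A * msqrt ((msqrt A)⁻¹ * B * (msqrt A)⁻¹) * msqrt A := rfl

lemma smul_posSemidef' {c : ℝ} (hc : 0 ≤ c) {P : Matrix n n ℂ} (hP : P.PosSemidef) :
    ((c : ℂ) • P).PosSemidef := by
  rw [posSemidef_iff_dotProduct_mulVec]
  constructor
  · rw [IsHermitian, conjTranspose_smul, hP.1.eq]
    congr 1
    simp [Complex.ext_iff]
  · intro x
    rw [smul_mulVec, dotProduct_smul, smul_eq_mul]
    exact mul_nonneg (by exact_mod_cast hc) (hP.dotProduct_mulVec_nonneg x)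

lemma posDef_conj_of_invertible' {A W : Matrix n n ℂ} (hA : A.PosDef) (hW : IsUnit W) :
    (Wᴴ * A * W).PosDef := by
  refine posDef_iff_dotProduct_mulVec.2 ⟨isHermitian_conjTranspose_mul_mul W hA.1, fun x hx => ?_⟩
  have h1 : (Wᴴ * A * W) *ᵥ x = Wᴴ *ᵥ (A *ᵥ (W *ᵥ x)) := by
    simp [mulVec_mulVec, Matrix.mul_assoc]
  rw [h1, dotProduct_mulVec, vecMul_conjTranspose]
  have hWx : W *ᵥ x ≠ 0 := fun h => hx (mulVec_injective_iff_isUnit.2 hW (by simpa using h))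
  simpa [star_star, dotProduct_mulVec] using hA.dotProduct_mulVec_pos hWx

lemma posDef_of_posSemidef_isUnit' {S : Matrix n n ℂ} (hS : S.PosSemidef) (h : IsUnit S) :
    S.PosDef := by
  refine posDef_iff_dotProduct_mulVec.2 ⟨hS.1, fun x hx => ?_⟩
  refine lt_of_le_of_ne (hS.dotProduct_mulVec_nonneg x) fun h0 => hx ?_
  have := (hS.dotProduct_mulVec_zero_iff x).mp h0.symm
  exact mulVec_injective_iff_isUnit.2 h (by simpa using this)

/-- If `Y` is Hermitian and `Y² ≤ N`, then `Y ≤ √N`. -/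
lemma le_sqrt_of_sq_le' {N Y : Matrix n n ℂ} (hN : N.PosSemidef) (hY : Y.IsHermitian)
    (h : (N - Y * Y).PosSemidef) : (hN.sqrt - Y).PosSemidef := by
  set S := hN.sqrt with hSdef
  have hS : S.PosSemidef := hN.posSemidef_sqrt
  have hH : (S - Y).IsHermitian := hS.1.sub hY
  refine hH.posSemidef_iff_eigenvalues_nonneg.2 fun i => ?_
  by_contra hneg
  push_neg at hneg
  set μ : ℝ := hH.eigenvalues i with hμdef
  set v : n → ℂ := ⇑(hH.eigenvectorBasis i) with hvdef
  have hv0 : v ≠ 0 := by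
    intro h0
    exact (hH.eigenvectorBasis).toBasis.ne_zero i (by ext j; exact congrFun h0 j)
  have heig : (S - Y) *ᵥ v = (μ : ℂ) • v := by
    have h2 := hH.mulVec_eigenvectorBasis i
    ext j
    have h3 := congrFun h2 j
    simpa [Complex.real_smul] using h3
  have hYv : Y *ᵥ v = S *ᵥ v - (μ : ℂ) • v := by
    have h4 : S *ᵥ v - Y *ᵥ v = (μ : ℂ) • v := by rw [← sub_mulVec, heig]
    rw [← h4]; abel
  set a : ℂ := star v ⬝ᵥ (S *ᵥ v) with hadef
  have ha : 0 ≤ a := hS.dotProduct_mulVec_nonneg v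
  set c : ℂ := star v ⬝ᵥ v with hcdef
  have hc : 0 < c := dotProduct_star_self_pos_iff.2 hv0
  set b : ℂ := star v ⬝ᵥ (N *ᵥ v) with hbdef
  have hstarS : star (S *ᵥ v) = star v ᵥ* S := by
    rw [star_mulVec, hS.1.eq]
  have hSv_v : star (S *ᵥ v) ⬝ᵥ v = a := by
    rw [hstarS, ← dotProduct_mulVec]
  have hSv_Sv : star (S *ᵥ v) ⬝ᵥ (S *ᵥ v) = b := by
    rw [hstarS, ← dotProduct_mulVec, mulVec_mulVec, hN.sqrt_mul_self]
  have hYY : star v ⬝ᵥ ((Y * Y) *ᵥ v) = star (Y *ᵥ v) ⬝ᵥ (Y *ᵥ v) := by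
    rw [star_mulVec, hY.eq, ← mulVec_mulVec, dotProduct_mulVec]
  have hexp : star (Y *ᵥ v) ⬝ᵥ (Y *ᵥ v) = b - (μ:ℂ) * a - (μ:ℂ) * a + (μ:ℂ) * (μ:ℂ) * c := by
    rw [hYv]
    rw [star_sub, star_smul]
    rw [sub_dotProduct, dotProduct_sub, dotProduct_sub, smul_dotProduct, smul_dotProduct,
      dotProduct_smul, hSv_Sv, hSv_v]
    simp only [dotProduct_smul, smul_eq_mul, Complex.star_def, Complex.conj_ofReal,
      ← hadef, ← hcdef]
    ring
  have hkey : 0 ≤ star v ⬝ᵥ ((N - Y * Y) *ᵥ v) := h.dotProduct_mulVec_nonneg v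
  rw [sub_mulVec, dotProduct_sub, hYY, hexp, ← hbdef] at hkey
  have hineq : (μ:ℂ) * (μ:ℂ) * c ≤ 2 * ((μ:ℂ) * a) := by
    rw [← sub_nonneg]
    convert hkey using 1
    ring
  have hre : μ * μ * c.re ≤ 2 * (μ * a.re) := by
    have h1 := (Complex.le_def.mp hineq).1
    have e1 : ((μ:ℂ) * (μ:ℂ) * c).re = μ * μ * c.re := by simp [Complex.mul_re]
    have e2 : ((2:ℂ) * ((μ:ℂ) * a)).re = 2 * (μ * a.re) := by simp [Complex.mul_re]
    rw [e1, e2] at h1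
    exact h1
  have hcre : 0 < c.re := (Complex.lt_def.mp hc).1
  have hare : 0 ≤ a.re := (Complex.le_def.mp ha).1
  nlinarith [mul_pos (mul_pos (neg_pos.2 hneg) (neg_pos.2 hneg)) hcre,
    mul_nonneg (le_of_lt (neg_pos.2 hneg)) hare]

lemma msqrt_posDef' {B : Matrix n n ℂ} (hB : B.PosDef) : (msqrt B).PosDef := by
  rw [msqrt, dif_pos hB.posSemidef]
  refine posDef_of_posSemidef_isUnit' hB.posSemidef.posSemidef_sqrt ?_
  have hdet : (hB.posSemidef.sqrt).det * (hB.posSemidef.sqrt).det = B.det := by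
    rw [← det_mul, hB.posSemidef.sqrt_mul_self]
  have : (hB.posSemidef.sqrt).det ≠ 0 := by
    intro h0
    rw [h0, mul_zero] at hdet
    exact hB.det_pos.ne' hdet.symm
  exact (isUnit_iff_isUnit_det _).2 (isUnit_iff_ne_zero.2 this)

lemma msqrt_mul_self' {B : Matrix n n ℂ} (hB : B.PosDef) : msqrt B * msqrt B = B := by
  rw [msqrt, dif_pos hB.posSemidef, hB.posSemidef.sqrt_mul_self]

lemma inner_posDef' {A B : Matrix n n ℂ} (hA : A.PosDef) (hB : B.PosDef) :
    ((msqrt B)⁻¹ * A * (msqrt B)⁻¹).PosDef := by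
  have hR := msqrt_posDef' hB
  have hW : ((msqrt B)⁻¹).PosDef := hR.inv
  have := posDef_conj_of_invertible' hA hW.isUnit
  rwa [hW.isHermitian.eq] at this

lemma geomMean_posDef' {A B : Matrix n n ℂ} (hA : A.PosDef) (hB : B.PosDef) :
    (geomMean B A).PosDef := by
  have hR := msqrt_posDef' hB
  have hN := inner_posDef' hA hB
  have hT : (msqrt ((msqrt B)⁻¹ * A * (msqrt B)⁻¹)).PosDef := msqrt_posDef' hN
  have := posDef_conj_of_invertible' hT hR.isUnit
  rw [hR.isHermitian.eq] at this
  rw [geomMean_def']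
  exact this

lemma geomMean_mul_inv_mul' {A B : Matrix n n ℂ} (hA : A.PosDef) (hB : B.PosDef) :
    geomMean B A * B⁻¹ * geomMean B A = A := by
  have hR := msqrt_posDef' hB
  have hN := inner_posDef' hA hB
  set R := msqrt B
  set T := msqrt ((msqrt B)⁻¹ * A * (msqrt B)⁻¹) with hTdef
  have hRR : R * R⁻¹ = 1 := mul_nonsing_inv _ (isUnit_iff_ne_zero.2 hR.det_pos.ne')
  have hRR' : R⁻¹ * R = 1 := nonsing_inv_mul _ (isUnit_iff_ne_zero.2 hR.det_pos.ne')
  have hTT : T * T = R⁻¹ * A * R⁻¹ := msqrt_mul_self' hN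
  have hBinv : B⁻¹ = R⁻¹ * R⁻¹ := by
    rw [← msqrt_mul_self' hB, Matrix.mul_inv_rev]
  rw [geomMean_def', hBinv]
  calc R * T * R * (R⁻¹ * R⁻¹) * (R * T * R)
      = R * T * (R * R⁻¹) * (R⁻¹ * R) * T * R := by simp only [Matrix.mul_assoc]
    _ = R * (T * T) * R := by rw [hRR, hRR']; simp only [Matrix.mul_one, Matrix.mul_assoc]
    _ = R * (R⁻¹ * A * R⁻¹) * R := by rw [hTT]
    _ = (R * R⁻¹) * A * (R⁻¹ * R) := by simp only [Matrix.mul_assoc]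
    _ = A := by rw [hRR, hRR']; simp

lemma le_geomMean' {A B : Matrix n n ℂ} (hA : A.PosDef) (hB : B.PosDef) {X : Matrix n n ℂ}
    (hX : X.IsHermitian) (h : (A - X * B⁻¹ * X).PosSemidef) :
    (geomMean B A - X).PosSemidef := by
  have hR := msqrt_posDef' hB
  have hN := inner_posDef' hA hB
  set R := msqrt B with hRdef
  set W := R⁻¹ with hWdef
  have hW : W.PosDef := hR.inv
  have hRR : R * W = 1 := mul_nonsing_inv _ (isUnit_iff_ne_zero.2 hR.det_pos.ne')
  have hRR' : W * R = 1 := nonsing_inv_mul _ (isUnit_iff_ne_zero.2 hR.det_pos.ne')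
  have hBinv : B⁻¹ = W * W := by rw [hWdef, ← msqrt_mul_self' hB, Matrix.mul_inv_rev]
  set Y := W * X * W with hYdef
  have hY : Y.IsHermitian := by
    have := isHermitian_conjTranspose_mul_mul W hX
    rwa [hW.isHermitian.eq] at this
  have hNY : ((W * A * W) - Y * Y).PosSemidef := by
    have h2 := h.conjTranspose_mul_mul_same W
    rw [hW.isHermitian.eq] at h2
    have e : W * (A - X * B⁻¹ * X) * W = (W * A * W) - Y * Y := by
      rw [hBinv, hYdef]
      noncomm_ring
    rwa [e] at h2
  have hNps : ((msqrt B)⁻¹ * A * (msqrt B)⁻¹).PosSemidef := hN.posSemidef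
  have hml : msqrt ((msqrt B)⁻¹ * A * (msqrt B)⁻¹) = hNps.sqrt := dif_pos hNps
  have h3 := le_sqrt_of_sq_le' hNps hY hNY
  have h4 := h3.mul_mul_conjTranspose_same R
  rw [hR.isHermitian.eq] at h4
  have e2 : R * (hNps.sqrt - Y) * R = geomMean B A - X := by
    rw [geomMean_def', ← hml, hYdef, ← hRdef]
    have : R * (W * X * W) * R = (R * W) * X * (W * R) := by
      simp only [Matrix.mul_assoc]
    rw [mul_sub, sub_mul, this, hRR, hRR', one_mul, mul_one]
  rwa [e2] at h4

lemma ofReal_mul_pos' {r : ℝ} (hr : 0 < r) {z : ℂ} (hz : 0 < z) : 0 < (r : ℂ) * z := by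
  have h1 : 0 < z.re := by simpa using (Complex.lt_def.mp hz).1
  have h2 : z.im = 0 := by simpa using (Complex.lt_def.mp hz).2.symm
  rw [Complex.lt_def]
  refine ⟨?_, ?_⟩
  · simpa [Complex.mul_re, h2] using mul_pos hr h1
  · simp [Complex.mul_im, h2]

lemma convex_posDef' {P Q : Matrix n n ℂ} (hP : P.PosDef) (hQ : Q.PosDef) {l : ℝ}
    (h0 : 0 ≤ l) (h1 : l ≤ 1) : ((l : ℂ) • P + (1 - (l : ℂ)) • Q).PosDef := by
  have hcast : (1 : ℂ) - (l : ℂ) = ((1 - l : ℝ) : ℂ) := by push_cast; ring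
  rw [posDef_iff_dotProduct_mulVec]
  constructor
  · rw [IsHermitian, conjTranspose_add, conjTranspose_smul, conjTranspose_smul,
      hP.1.eq, hQ.1.eq, hcast]
    simp [Complex.star_def, Complex.conj_ofReal]
  · intro x hx
    rw [add_mulVec, smul_mulVec, smul_mulVec, dotProduct_add,
      dotProduct_smul, dotProduct_smul, smul_eq_mul, smul_eq_mul, hcast]
    rcases eq_or_lt_of_le h0 with h | h
    · rw [← h]
      simpa using hQ.dotProduct_mulVec_pos hx
    · rcases eq_or_lt_of_le h1 with h' | h'
      · rw [h']
        simpa using hP.dotProduct_mulVec_pos hx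
      · exact add_pos (ofReal_mul_pos' h (hP.dotProduct_mulVec_pos hx)) (ofReal_mul_pos' (by linarith) (hQ.dotProduct_mulVec_pos hx))

lemma fromBlocks_psd_zero' {P : Matrix n n ℂ} (hP : P.PosSemidef) :
    (fromBlocks P 0 0 (0 : Matrix n n ℂ)).PosSemidef := by
  have h := hP.mul_mul_conjTranspose_same (fromRows (1 : Matrix n n ℂ) (0 : Matrix n n ℂ))
  rw [conjTranspose_fromRows_eq_fromCols_conjTranspose, fromRows_mul,
    fromRows_mul_fromCols] at h
  simpa using h

lemma schur_block_psd' {M : Matrix n n ℂ} (C : Matrix n n ℂ) (hM : M.PosDef) :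
    (fromBlocks M C Cᴴ (Cᴴ * M⁻¹ * C)).PosSemidef := by
  haveI := hM.isUnit.invertible
  exact (PosDef.fromBlocks₁₁ C _ hM).2 (by rw [sub_self]; exact Matrix.PosSemidef.zero)

lemma schur_of_block' {M C D : Matrix n n ℂ} (hM : M.PosDef)
    (h : (fromBlocks M C Cᴴ D).PosSemidef) : (D - Cᴴ * M⁻¹ * C).PosSemidef := by
  haveI := hM.isUnit.invertible
  exact (PosDef.fromBlocks₁₁ C D hM).1 h

lemma conjTranspose_combo {C₁ C₂ : Matrix n n ℂ} (l : ℝ) :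
    ((l : ℂ) • C₁ + (1 - (l : ℂ)) • C₂)ᴴ = (l : ℂ) • C₁ᴴ + (1 - (l : ℂ)) • C₂ᴴ := by
  rw [conjTranspose_add, conjTranspose_smul, conjTranspose_smul]
  congr 2 <;> simp [Complex.ext_iff]

lemma combo_fromBlocks_psd' {l : ℝ} (h0 : 0 ≤ l) (h1 : l ≤ 1)
    {M₁ M₂ C₁ C₂ D₁ D₂ : Matrix n n ℂ}
    (hb₁ : (fromBlocks M₁ C₁ C₁ᴴ D₁).PosSemidef)
    (hb₂ : (fromBlocks M₂ C₂ C₂ᴴ D₂).PosSemidef) :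
    (fromBlocks ((l : ℂ) • M₁ + (1 - (l : ℂ)) • M₂) ((l : ℂ) • C₁ + (1 - (l : ℂ)) • C₂)
      ((l : ℂ) • C₁ + (1 - (l : ℂ)) • C₂)ᴴ
      ((l : ℂ) • D₁ + (1 - (l : ℂ)) • D₂)).PosSemidef := by
  have hcast : (1 : ℂ) - (l : ℂ) = ((1 - l : ℝ) : ℂ) := by push_cast; ring
  rw [conjTranspose_combo]
  have h := (smul_posSemidef' h0 hb₁).add (smul_posSemidef' (by linarith : (0:ℝ) ≤ 1 - l) hb₂)
  rw [Matrix.fromBlocks_smul, Matrix.fromBlocks_smul, Matrix.fromBlocks_add] at h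
  rw [hcast]
  exact h

end Auxiliary

/-- Joint convexity of `L(A,B,C) = C* G(A,B)⁻¹ C` where `G` is the geometric mean
`G(A,B) = B^{1/2}(B^{-1/2} A B^{-1/2})^{1/2} B^{1/2}`. -/
theorem lieb_ruskai_geomMean_convexity {n : Type*} [Fintype n] [DecidableEq n]
    (A₁ A₂ B₁ B₂ C₁ C₂ : Matrix n n ℂ)
    (hA₁ : A₁.PosDef) (hA₂ : A₂.PosDef) (hB₁ : B₁.PosDef) (hB₂ : B₂.PosDef)
    (l : ℝ) (hl0 : 0 ≤ l) (hl1 : l ≤ 1) :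
    (((l : ℂ) • (C₁ᴴ * (geomMean B₁ A₁)⁻¹ * C₁) +
        (1 - (l : ℂ)) • (C₂ᴴ * (geomMean B₂ A₂)⁻¹ * C₂)) -
      ((l : ℂ) • C₁ + (1 - (l : ℂ)) • C₂)ᴴ *
        (geomMean ((l : ℂ) • B₁ + (1 - (l : ℂ)) • B₂)
                  ((l : ℂ) • A₁ + (1 - (l : ℂ)) • A₂))⁻¹ *
        ((l : ℂ) • C₁ + (1 - (l : ℂ)) • C₂)).PosSemidef := by
  set G₁ := geomMean B₁ A₁ with hG₁def
  set G₂ := geomMean B₂ A₂ with hG₂def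
  have hG₁ : G₁.PosDef := geomMean_posDef' hA₁ hB₁
  have hG₂ : G₂.PosDef := geomMean_posDef' hA₂ hB₂
  set Al := (l : ℂ) • A₁ + (1 - (l : ℂ)) • A₂ with hAldef
  set Bl := (l : ℂ) • B₁ + (1 - (l : ℂ)) • B₂ with hBldef
  have hAl : Al.PosDef := convex_posDef' hA₁ hA₂ hl0 hl1
  have hBl : Bl.PosDef := convex_posDef' hB₁ hB₂ hl0 hl1
  set Gl := geomMean Bl Al with hGldef
  have hGl : Gl.PosDef := geomMean_posDef' hAl hBl
  set Gm := (l : ℂ) • G₁ + (1 - (l : ℂ)) • G₂ with hGmdef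
  have hGm : Gm.IsHermitian := by
    rw [hGmdef, IsHermitian, conjTranspose_combo, hG₁.isHermitian.eq, hG₂.isHermitian.eq]
  -- step 1 : concavity of the geometric mean
  have hb₁ : (fromBlocks B₁ G₁ G₁ᴴ A₁).PosSemidef := by
    haveI := hB₁.isUnit.invertible
    refine (PosDef.fromBlocks₁₁ G₁ A₁ hB₁).2 ?_
    rw [hG₁.isHermitian.eq, hG₁def, geomMean_mul_inv_mul' hA₁ hB₁, sub_self]
    exact Matrix.PosSemidef.zero
  have hb₂ : (fromBlocks B₂ G₂ G₂ᴴ A₂).PosSemidef := by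
    haveI := hB₂.isUnit.invertible
    refine (PosDef.fromBlocks₁₁ G₂ A₂ hB₂).2 ?_
    rw [hG₂.isHermitian.eq, hG₂def, geomMean_mul_inv_mul' hA₂ hB₂, sub_self]
    exact Matrix.PosSemidef.zero
  have hcombo := combo_fromBlocks_psd' hl0 hl1 hb₁ hb₂
  have hschur := schur_of_block' hBl hcombo
  rw [hGm.eq] at hschur
  have hconc : (Gl - Gm).PosSemidef := le_geomMean' hAl hBl hGm hschur
  -- step 2 : Lieb–Ruskai base case via Schur complements
  have hk₁ : (fromBlocks G₁ C₁ C₁ᴴ (C₁ᴴ * G₁⁻¹ * C₁)).PosSemidef := schur_block_psd' C₁ hG₁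
  have hk₂ : (fromBlocks G₂ C₂ C₂ᴴ (C₂ᴴ * G₂⁻¹ * C₂)).PosSemidef := schur_block_psd' C₂ hG₂
  have hkcombo := combo_fromBlocks_psd' hl0 hl1 hk₁ hk₂
  set Cl := (l : ℂ) • C₁ + (1 - (l : ℂ)) • C₂ with hCldef
  set T := (l : ℂ) • (C₁ᴴ * G₁⁻¹ * C₁) + (1 - (l : ℂ)) • (C₂ᴴ * G₂⁻¹ * C₂) with hTdef
  have htotal : (fromBlocks Gl Cl Clᴴ T).PosSemidef := by
    have hsum := hkcombo.add (fromBlocks_psd_zero' hconc)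
    rw [Matrix.fromBlocks_add] at hsum
    rw [← hGmdef, add_sub_cancel, add_zero, add_zero, add_zero] at hsum
    exact hsum
  exact schur_of_block' hGl htotal
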